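/- arXiv:1011.3487 — 3 statements merged into one kernel-verified Lean document; each statement's English description precedes it below -/
import Mathlib

section
/- For any prime p > 3, sum_{k=1}^{p-1} H_k^{(2)} ≡ 0 (mod p^2) and sum_{k=1}^{p-1} H_k^{(3)} ≡ 0 (mod p), where H_k^{(m)} = sum_{j=1}^k 1/j^m. -/
open Finset

lemma sum_range_zmod {p : ℕ} [NeZero p] {M : Type*} [AddCommMonoid M] (f : ZMod p → M) :
    ∑ j ∈ range p, f (j : ZMod p) = ∑ x : ZMod p, f x :=
  Finset.sum_nbij' (fun j => (j : ZMod p)) (fun x => x.val)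
    (fun a _ => mem_univ _) (fun a _ => mem_range.2 (ZMod.val_lt a))
    (fun a ha => ZMod.val_cast_of_lt (mem_range.1 ha))
    (fun a _ => ZMod.natCast_rightInverse a) (fun a _ => rfl)

lemma core (p : ℕ) [hp : Fact p.Prime] (h : 3 < p) :
    ∑ j ∈ Icc 1 (p-1), ((j : ZMod p)⁻¹)^2 = 0 := by
  have h0 : Icc 1 (p-1) = Ico 1 p := by
    ext x; simp [Nat.lt_iff_le_pred (show 0 < p by omega)]
  have h2 : range p = insert 0 (Ico 1 p) := by
    ext x; simp [Finset.mem_range, Finset.mem_Ico]; omega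
  have h3 : ∑ j ∈ Icc 1 (p-1), ((j : ZMod p)⁻¹)^2
      = ∑ j ∈ range p, (((j : ZMod p))⁻¹)^2 := by
    rw [h0, h2, Finset.sum_insert (by simp)]
    simp
  rw [h3, sum_range_zmod (fun x => (x⁻¹)^2)]
  have h4 : (∑ x : ZMod p, (x⁻¹)^2) = ∑ x : ZMod p, x^2 :=
    Fintype.sum_equiv (Equiv.inv (ZMod p)) _ _ (fun x => rfl)
  rw [h4]
  have h5 : (2 : ℕ) < Fintype.card (ZMod p) - 1 := by rw [ZMod.card]; omega
  exact FiniteField.sum_pow_lt_card_sub_one (ZMod p) 2 h5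

section pieces
variable (p : ℕ) [hp : Fact p.Prime]

lemma jdvd {j : ℕ} (hj : j ∈ Icc 1 (p-1)) : j ∣ (p-1).factorial := by
  simp only [mem_Icc] at hj
  exact Nat.dvd_factorial (by omega) hj.2

lemma jne {j : ℕ} (hj : j ∈ Icc 1 (p-1)) : ((j : ZMod p)) ≠ 0 := by
  simp only [mem_Icc] at hj
  rw [Ne, ZMod.natCast_eq_zero_iff]
  intro hd
  have := Nat.le_of_dvd (by omega) hd
  omega

lemma quot_cast {j : ℕ} (hj : j ∈ Icc 1 (p-1)) :
    (((p-1).factorial / j : ℕ) : ZMod p) = ((p-1).factorial : ZMod p) * ((j : ZMod p))⁻¹ := by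
  have h1 : (j : ZMod p) * (((p-1).factorial / j : ℕ) : ZMod p) = ((p-1).factorial : ZMod p) := by
    rw [← Nat.cast_mul, Nat.mul_div_cancel' (jdvd p hj)]
  field_simp [jne p hj]
  rw [mul_comm] at h1
  rw [h1]

-- p ∣ B
lemma hB (h : 3 < p) : (((∑ j ∈ Icc 1 (p-1), ((p-1).factorial/j)^2 : ℕ)) : ZMod p) = 0 := by
  push_cast
  rw [Finset.sum_congr rfl (fun j hj => by rw [quot_cast p hj, mul_pow])]
  rw [← Finset.mul_sum]
  rw [show (∑ i ∈ Icc 1 (p-1), ((i:ZMod p)⁻¹)^2) = 0 from core p h]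
  ring

end pieces

section w
variable (p : ℕ) [hp : Fact p.Prime]

lemma quot_cast' {d : ℕ} (hd : d ∣ (p-1).factorial) (hdn : ((d : ZMod p)) ≠ 0) :
    (((p-1).factorial / d : ℕ) : ZMod p) = -((d : ZMod p))⁻¹ := by
  have h1 : (((p-1).factorial / d : ℕ) : ZMod p) * (d : ZMod p) = ((p-1).factorial : ZMod p) := by
    rw [← Nat.cast_mul, Nat.div_mul_cancel hd]
  rw [ZMod.wilsons_lemma p] at h1
  field_simp
  exact h1

lemma cop_pair (h : 3 < p) {j : ℕ} (hj : j ∈ Icc 1 (p-1)) : Nat.Coprime j (p - j) := by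
  simp only [mem_Icc] at hj
  have hd : Nat.gcd j (p-j) ∣ p := by
    have := Nat.dvd_add (Nat.gcd_dvd_left j (p-j)) (Nat.gcd_dvd_right j (p-j))
    rwa [show j + (p - j) = p by omega] at this
  rcases (Nat.Prime.eq_one_or_self_of_dvd hp.out _ hd) with h1 | h1
  · exact h1
  · exfalso
    have := Nat.le_of_dvd (by omega) (Nat.gcd_dvd_left j (p-j))
    omega

lemma pair_mem (h : 3 < p) {j : ℕ} (hj : j ∈ Icc 1 (p-1)) : p - j ∈ Icc 1 (p-1) := by
  simp only [mem_Icc] at *; omega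

lemma pair_sum (h : 3 < p) {j : ℕ} (hj : j ∈ Icc 1 (p-1)) :
    (p-1).factorial / j + (p-1).factorial / (p - j)
      = p * ((p-1).factorial / (j * (p - j))) := by
  simp only [mem_Icc] at hj
  have hab : j * (p - j) ∣ (p-1).factorial :=
    Nat.Coprime.mul_dvd_of_dvd_of_dvd (cop_pair p h (by simp only [mem_Icc]; omega))
      (jdvd p (by simp only [mem_Icc]; omega))
      (jdvd p (by simp only [mem_Icc]; omega))
  set m := (p-1).factorial / (j * (p - j)) with hm
  have hF : (p-1).factorial = j * (p - j) * m := (Nat.mul_div_cancel' hab).symm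
  have h1 : (p-1).factorial / j = (p - j) * m := by
    rw [hF, mul_assoc]; exact Nat.mul_div_cancel_left _ (by omega)
  have h2 : (p-1).factorial / (p - j) = j * m := by
    rw [hF, show j * (p-j) * m = (p-j) * (j*m) by ring]
    exact Nat.mul_div_cancel_left _ (by omega)
  rw [h1, h2, ← Nat.add_mul, show p - j + j = p by omega]

lemma wolst (h : 3 < p) : (p^2 : ℕ) ∣ ∑ j ∈ Icc 1 (p-1), (p-1).factorial / j := by
  have hrev : ∑ j ∈ Icc 1 (p-1), (p-1).factorial / (p - j)
      = ∑ j ∈ Icc 1 (p-1), (p-1).factorial / j := by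
    apply Finset.sum_nbij' (fun j => p - j) (fun j => p - j) <;>
      intro a ha <;> simp only [mem_Icc] at * <;> try omega
  have h2 : 2 * (∑ j ∈ Icc 1 (p-1), (p-1).factorial / j)
      = p * ∑ j ∈ Icc 1 (p-1), (p-1).factorial / (j * (p - j)) := by
    rw [two_mul]
    nth_rewrite 2 [← hrev]
    rw [← Finset.sum_add_distrib, Finset.mul_sum]
    exact Finset.sum_congr rfl (fun j hj => pair_sum p h hj)
  have h3 : (p : ℕ) ∣ ∑ j ∈ Icc 1 (p-1), (p-1).factorial / (j * (p - j)) := by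
    rw [← ZMod.natCast_eq_zero_iff]
    push_cast
    rw [Finset.sum_congr rfl (fun j hj => by
      have hj' := hj; simp only [mem_Icc] at hj'
      have hd : ((j * (p - j) : ℕ) : ZMod p) = -((j : ZMod p))^2 := by
        push_cast [Nat.cast_sub (show j ≤ p by omega)]
        rw [ZMod.natCast_self]; ring
      have hdn : ((j * (p - j) : ℕ) : ZMod p) ≠ 0 := by
        rw [hd, neg_ne_zero, pow_ne_zero_iff two_ne_zero]
        exact jne p hj
      rw [quot_cast' p (Nat.Coprime.mul_dvd_of_dvd_of_dvd (cop_pair p h hj)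
        (jdvd p hj) (jdvd p (pair_mem p h hj))) hdn, hd])]
    rw [Finset.sum_congr rfl (fun j hj => by
      rw [show -(-((j : ZMod p))^2)⁻¹ = ((j:ZMod p)⁻¹)^2 by
        rw [inv_neg, neg_neg, inv_pow]])]
    exact core p h
  have h4 : (p^2 : ℕ) ∣ 2 * (∑ j ∈ Icc 1 (p-1), (p-1).factorial / j) := by
    rw [h2, pow_two]
    exact Nat.mul_dvd_mul_left p h3
  have hcop : Nat.Coprime (p^2) 2 :=
    Nat.Coprime.pow_left _ ((Nat.coprime_primes hp.out Nat.prime_two).2 (by omega))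
  exact hcop.dvd_of_dvd_mul_left h4

end w

lemma swap_sum {M : Type*} [AddCommMonoid M] (n : ℕ) (f : ℕ → M) :
    ∑ k ∈ Icc 1 n, ∑ j ∈ Icc 1 k, f j = ∑ j ∈ Icc 1 n, (n + 1 - j) • f j := by
  rw [Finset.sum_comm' (s := Icc 1 n) (t := fun k => Icc 1 k) (t' := Icc 1 n)
    (s' := fun j => Icc j n) (f := fun _ j => f j)
    (by intro x y; simp only [mem_Icc]; omega)]
  exact Finset.sum_congr rfl (fun j _ => by rw [Finset.sum_const, Nat.card_Icc])

section main
variable (p : ℕ) [hp : Fact p.Prime]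

lemma rat_eq (h : 3 < p) (m : ℕ) (hm : 0 < m) :
    (∑ k ∈ Icc 1 (p - 1), ∑ j ∈ Icc 1 k, (1 : ℚ) / (j : ℚ) ^ m)
      = ((∑ j ∈ Icc 1 (p-1), (p - j) * ((p-1).factorial / j)^m : ℕ) : ℚ)
        / ((p-1).factorial : ℚ) ^ m := by
  have hF0 : ((p-1).factorial : ℚ) ≠ 0 := by
    exact_mod_cast Nat.factorial_ne_zero (p-1)
  rw [swap_sum, Nat.cast_sum, Finset.sum_div]
  apply Finset.sum_congr rfl
  intro j hj
  have hj' := hj; simp only [mem_Icc] at hj'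
  have hj0 : (j : ℚ) ≠ 0 := by
    exact_mod_cast (by omega : j ≠ 0)
  have hq : (((p-1).factorial / j : ℕ) : ℚ) = ((p-1).factorial : ℚ) / j :=
    Nat.cast_div (jdvd p hj) hj0
  rw [Nat.cast_mul, Nat.cast_pow, hq, div_pow, show p - 1 + 1 - j = p - j by omega,
    nsmul_eq_mul, Nat.cast_sub (by omega : j ≤ p)]
  field_simp

lemma norm_le (h : 3 < p) (m n : ℕ) (hm : 0 < m)
    (hd : (p^n : ℕ) ∣ ∑ j ∈ Icc 1 (p-1), (p - j) * ((p-1).factorial / j)^m) :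
    ‖((∑ k ∈ Icc 1 (p - 1), ∑ j ∈ Icc 1 k, (1 : ℚ) / (j : ℚ) ^ m : ℚ) : ℚ_[p])‖
      ≤ (p : ℝ) ^ (-(n:ℤ)) := by
  rw [rat_eq p h m hm]
  have hF0 : ((p-1).factorial : ℚ_[p]) ≠ 0 := by
    exact_mod_cast Nat.cast_ne_zero.2 (Nat.factorial_ne_zero (p-1))
  have hcast : ((((∑ j ∈ Icc 1 (p-1), (p - j) * ((p-1).factorial / j)^m : ℕ) : ℚ)
        / ((p-1).factorial : ℚ) ^ m : ℚ) : ℚ_[p])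
      = ((∑ j ∈ Icc 1 (p-1), (p - j) * ((p-1).factorial / j)^m : ℕ) : ℚ_[p])
        / ((p-1).factorial : ℚ_[p]) ^ m := by
    push_cast
    ring
  rw [hcast, norm_div, norm_pow]
  have hFnorm : ‖((p-1).factorial : ℚ_[p])‖ = 1 := by
    apply le_antisymm
    · exact_mod_cast Padic.norm_int_le_one ((p-1).factorial : ℤ)
    · by_contra hlt
      push_neg at hlt
      have h1 : ‖(((p-1).factorial : ℤ) : ℚ_[p])‖ < 1 := by push_cast; exact hlt
      rw [Padic.norm_intCast_lt_one_iff] at h1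
      have : p ∣ (p-1).factorial := by exact_mod_cast h1
      rw [hp.out.dvd_factorial] at this
      omega
  rw [hFnorm, one_pow, div_one]
  have := (Padic.norm_int_le_pow_iff_dvd
    ((∑ j ∈ Icc 1 (p-1), (p - j) * ((p-1).factorial / j)^m : ℕ) : ℤ) n).2
    (by exact_mod_cast hd)
  calc ‖((∑ j ∈ Icc 1 (p-1), (p - j) * ((p-1).factorial / j)^m : ℕ) : ℚ_[p])‖
      = ‖((((∑ j ∈ Icc 1 (p-1), (p - j) * ((p-1).factorial / j)^m : ℕ) : ℤ)) : ℚ_[p])‖ := by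
        push_cast; rfl
    _ ≤ (p : ℝ) ^ (-(n:ℤ)) := this

end main

section dvds
variable (p : ℕ) [hp : Fact p.Prime]

lemma split_sum (h : 3 < p) (m : ℕ) :
    (∑ j ∈ Icc 1 (p-1), (p - j) * ((p-1).factorial / j)^(m+1))
        + (p-1).factorial * (∑ j ∈ Icc 1 (p-1), ((p-1).factorial / j)^m)
      = p * ∑ j ∈ Icc 1 (p-1), ((p-1).factorial / j)^(m+1) := by
  rw [Finset.mul_sum, Finset.mul_sum, ← Finset.sum_add_distrib]
  apply Finset.sum_congr rfl
  intro j hj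
  have hj' := Finset.mem_Icc.1 hj
  set t := (p-1).factorial / j with ht
  have hn : j * t = (p-1).factorial := Nat.mul_div_cancel' (jdvd p hj)
  have key : (p - j) * t + (p-1).factorial = p * t := by
    rw [← hn, ← Nat.add_mul, show p - j + j = p by omega]
  calc (p - j) * t^(m+1) + (p-1).factorial * t^m
      = ((p - j) * t + (p-1).factorial) * t^m := by ring
    _ = (p * t) * t^m := by rw [key]
    _ = p * t^(m+1) := by ring

lemma hBdvd (h : 3 < p) : (p:ℕ) ∣ ∑ j ∈ Icc 1 (p-1), ((p-1).factorial/j)^2 :=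
  (ZMod.natCast_eq_zero_iff _ p).1 (hB p h)

lemma dvd2 (h : 3 < p) :
    (p^2 : ℕ) ∣ ∑ j ∈ Icc 1 (p-1), (p - j) * ((p-1).factorial / j)^2 := by
  have h1 : (p^2 : ℕ) ∣ (∑ j ∈ Icc 1 (p-1), (p - j) * ((p-1).factorial / j)^2)
      + (p-1).factorial * (∑ j ∈ Icc 1 (p-1), ((p-1).factorial / j)^1) := by
    rw [split_sum p h 1, pow_two]
    exact Nat.mul_dvd_mul_left p (hBdvd p h)
  have h2 : (p^2 : ℕ) ∣ (p-1).factorial * (∑ j ∈ Icc 1 (p-1), ((p-1).factorial / j)^1) := by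
    apply Dvd.dvd.mul_left
    simpa [pow_one] using wolst p h
  have := Nat.dvd_sub h1 h2
  simpa using this

lemma dvd3 (h : 3 < p) :
    (p^1 : ℕ) ∣ ∑ j ∈ Icc 1 (p-1), (p - j) * ((p-1).factorial / j)^3 := by
  have h1 : (p^1 : ℕ) ∣ (∑ j ∈ Icc 1 (p-1), (p - j) * ((p-1).factorial / j)^3)
      + (p-1).factorial * (∑ j ∈ Icc 1 (p-1), ((p-1).factorial / j)^2) := by
    rw [split_sum p h 2, pow_one]
    exact Dvd.dvd.mul_right (dvd_refl p) _
  have h2 : (p^1 : ℕ) ∣ (p-1).factorial * (∑ j ∈ Icc 1 (p-1), ((p-1).factorial / j)^2) := by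
    apply Dvd.dvd.mul_left
    simpa using hBdvd p h
  have := Nat.dvd_sub h1 h2
  simpa using this

end dvds

theorem stmt_12 (p : ℕ) [hp : Fact p.Prime] (h : 3 < p) :
    ‖((∑ k ∈ Finset.Icc 1 (p - 1), ∑ j ∈ Finset.Icc 1 k, (1 : ℚ) / (j : ℚ) ^ 2 : ℚ) : ℚ_[p])‖
        ≤ (p : ℝ) ^ (-2 : ℤ) ∧
    ‖((∑ k ∈ Finset.Icc 1 (p - 1), ∑ j ∈ Finset.Icc 1 k, (1 : ℚ) / (j : ℚ) ^ 3 : ℚ) : ℚ_[p])‖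
        ≤ (p : ℝ) ^ (-1 : ℤ) := by
  constructor
  · have := norm_le p h 2 2 (by norm_num) (dvd2 p h)
    simpa using this
  · have := norm_le p h 3 1 (by norm_num) (dvd3 p h)
    simpa using this
end

section
/- For any prime p > 3, sum_{k=1}^{p-1} sum_{1 ≤ i_1 < i_2 < i_3 < i_4 ≤ k} 1/(i_1 i_2 i_3 i_4) ≡ -1 (mod p). -/
open Finset Polynomial

section aux

lemma peel15 {M : Type*} [CommRing M] (f : ℕ → M) {a : ℕ} {s : Finset ℕ} (ha : a ∉ s) (j : ℕ) :
    ∑ S ∈ (insert a s).powersetCard (j+1), ∏ i ∈ S, f i =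
      ∑ S ∈ s.powersetCard (j+1), ∏ i ∈ S, f i
        + f a * ∑ S ∈ s.powersetCard j, ∏ i ∈ S, f i := by
  rw [Finset.powersetCard_succ_insert ha, Finset.sum_union, Finset.sum_image, Finset.mul_sum]
  · congr 1
    refine Finset.sum_congr rfl fun S hS => ?_
    rw [Finset.prod_insert fun haS => ha ((Finset.mem_powersetCard.mp hS).1 haS)]
  · intro S hS T hT hST
    have hSa : a ∉ S := fun haS => ha ((Finset.mem_powersetCard.mp hS).1 haS)
    have hTa : a ∉ T := fun haT => ha ((Finset.mem_powersetCard.mp hT).1 haT)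
    rw [← Finset.erase_insert hSa, ← Finset.erase_insert hTa, hST]
  · rw [Finset.disjoint_left]
    intro S hS hS'
    obtain ⟨T, hT, rfl⟩ := Finset.mem_image.mp hS'
    exact ha ((Finset.mem_powersetCard.mp hS).1 (Finset.mem_insert_self a T))

lemma icc_left15 (n : ℕ) : Finset.Icc 1 (n+1) = insert 1 (Finset.Icc 2 (n+1)) := by
  ext x; simp [Finset.mem_Icc, Finset.mem_insert]; omega

lemma hockey15 {F : Type*} [Field F] (f : ℕ → F) (n : ℕ)
    (hf : ∀ m, 1 ≤ m → m ≤ n + 1 → (m : F) * f m = 1) :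
    ∑ k ∈ Finset.Icc 1 n, ∑ S ∈ Finset.powersetCard 4 (Finset.Icc 1 k), ∏ i ∈ S, f i
      = ((n : F) + 1) * ∑ S ∈ Finset.powersetCard 4 (Finset.Icc 2 (n+1)), ∏ i ∈ S, f i := by
  induction n with
  | zero =>
    rw [show Finset.Icc 2 (0+1) = (∅ : Finset ℕ) from rfl,
      Finset.powersetCard_eq_empty.mpr (by simp)]
    simp
  | succ n ih =>
    have hf' : ∀ m, 1 ≤ m → m ≤ n + 1 → (m : F) * f m = 1 := fun m h1 h2 => hf m h1 (by omega)
    have hf1 : f 1 = 1 := by have := hf 1 (by omega) (by omega); simpa using this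
    have hfn2 : ((n : F) + 2) * f (n+2) = 1 := by
      have := hf (n+2) (by omega) (by omega)
      push_cast at this
      linear_combination this
    have h1 : Finset.Icc 1 (n+1) = insert (n+1) (Finset.Icc 1 n) := by
      ext x; simp [Finset.mem_Icc, Finset.mem_insert]; omega
    rw [h1, Finset.sum_insert (by simp), ih hf']
    have h2 := peel15 f (a := 1) (s := Finset.Icc 2 (n+1)) (by simp) 3
    have h3 := peel15 f (a := n+2) (s := Finset.Icc 2 (n+1)) (by simp) 3
    simp only [show (3:ℕ)+1 = 4 from rfl] at h2 h3
    have hicc2 : Finset.Icc 2 (n+2) = insert (n+2) (Finset.Icc 2 (n+1)) := by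
      ext x; simp [Finset.mem_Icc, Finset.mem_insert]; omega
    rw [show n+1+1 = n+2 from rfl, icc_left15 n, hicc2, h2, h3, hf1]
    push_cast
    linear_combination (-(∑ S ∈ Finset.powersetCard 3 (Finset.Icc 2 (n+1)), ∏ i ∈ S, f i)) * hfn2

variable {p : ℕ} [hp : Fact p.Prime]

lemma cast_ne_zero_of_mem15 {i : ℕ} (h1 : 1 ≤ i) (h2 : i ≤ p - 1) : ((i : ZMod p)) ≠ 0 := by
  intro h
  have := (ZMod.natCast_eq_zero_iff i p).mp h
  have := Nat.le_of_dvd (by omega) this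
  have := hp.out.two_le
  omega

lemma prod_univ_X_sub_C15 :
    ∏ a : ZMod p, (X - C a) = X ^ p - X := by
  have hcard : Fintype.card (ZMod p) = p := ZMod.card p
  have hm : ((X:(ZMod p)[X]) ^ p - X).Monic := by
    apply monic_X_pow_sub
    rw [degree_X]
    exact_mod_cast hp.out.one_lt
  have hroots : (X ^ p - X : (ZMod p)[X]).roots = Finset.univ.val := by
    have := FiniteField.roots_X_pow_card_sub_X (ZMod p)
    rwa [hcard] at this
  have h := prod_multiset_X_sub_C_of_monic_of_roots_card_eq hm ?_
  · rw [hroots] at h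
    rw [← h]
    rfl
  · rw [hroots]
    rw [FiniteField.X_pow_card_sub_X_natDegree_eq _ hp.out.one_lt]
    simp [hcard]

lemma Qpoly15 (hp5 : 3 < p) :
    ∏ i ∈ Finset.Icc 1 (p-1), (X + C ((i : ZMod p)⁻¹)) = X ^ (p-1) - 1 := by
  have h2 := hp.out.two_le
  have key : ∏ i ∈ Finset.Icc 1 (p-1), (X + C ((i : ZMod p)⁻¹))
      = ∏ a ∈ Finset.univ.erase (0 : ZMod p), (X - C a) := by
    refine Finset.prod_bij (fun i _ => -((i : ZMod p)⁻¹)) ?_ ?_ ?_ ?_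
    · intro i hi
      simp only [Finset.mem_Icc] at hi
      simp only [Finset.mem_erase, Finset.mem_univ, and_true]
      simpa using (cast_ne_zero_of_mem15 hi.1 hi.2)
    · intro i hi j hj hij
      simp only [Finset.mem_Icc] at hi hj
      have : ((i : ZMod p)) = j := by
        have := neg_injective hij
        exact inv_injective this
      have hi' : i < p := by omega
      have hj' : j < p := by omega
      rw [← ZMod.val_cast_of_lt hi', ← ZMod.val_cast_of_lt hj', this]
    · intro b hb
      simp only [Finset.mem_erase, Finset.mem_univ, and_true] at hb
      refine ⟨(-b⁻¹).val, ?_, ?_⟩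
      · simp only [Finset.mem_Icc]
        have hlt : (-b⁻¹).val < p := ZMod.val_lt _
        have hnz : (-b⁻¹).val ≠ 0 := by
          rw [Ne, ZMod.val_eq_zero, neg_eq_zero, inv_eq_zero]
          exact hb
        omega
      · show -(((-b⁻¹).val : ZMod p))⁻¹ = b
        rw [ZMod.natCast_val, ZMod.cast_id, inv_neg, inv_inv, neg_neg]
    · intro i hi
      show X + C ((i : ZMod p)⁻¹) = X - C (-((i : ZMod p)⁻¹))
      rw [map_neg, sub_neg_eq_add]
  rw [key]
  have h0 : ∏ a : ZMod p, (X - C a)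
      = (X - C 0) * ∏ a ∈ Finset.univ.erase (0 : ZMod p), (X - C a) :=
    (Finset.mul_prod_erase _ _ (Finset.mem_univ 0)).symm
  rw [prod_univ_X_sub_C15] at h0
  have hx : (X : (ZMod p)[X]) ^ p - X = X * (X ^ (p-1) - 1) := by
    rw [mul_sub, mul_one, ← pow_succ']
    congr 2
    omega
  rw [hx, map_zero, sub_zero] at h0
  exact (mul_left_cancel₀ X_ne_zero h0).symm

lemma esymm_full_zero15 (hp5 : 3 < p) {j : ℕ} (hj1 : 1 ≤ j) (hj3 : j ≤ 3) :
    ∑ S ∈ Finset.powersetCard j (Finset.Icc 1 (p-1)), ∏ i ∈ S, (i : ZMod p)⁻¹ = 0 := by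
  have h4 : p ≠ 4 := by rintro rfl; exact absurd hp.out (by norm_num)
  have h5 : 5 ≤ p := by omega
  have hcard : (Finset.Icc 1 (p-1)).card = p - 1 := by
    rw [Nat.card_Icc]; omega
  have h := Finset.prod_X_add_C_coeff (Finset.Icc 1 (p-1))
    (fun i => ((i : ZMod p)⁻¹)) (k := p - 1 - j) (by omega)
  rw [Qpoly15 hp5, hcard] at h
  have hsub : p - 1 - (p - 1 - j) = j := by omega
  rw [hsub] at h
  rw [← h]
  rw [coeff_sub, coeff_X_pow, coeff_one]
  rw [if_neg (show ¬ (p - 1 - j) = (p - 1) by omega),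
    if_neg (show ¬ (p - 1 - j) = 0 by omega), sub_zero]

lemma esymm_tail15 (hp5 : 3 < p) :
    ∑ S ∈ Finset.powersetCard 3 (Finset.Icc 2 (p-1)), ∏ i ∈ S, (i : ZMod p)⁻¹ = -1 := by
  have hicc : Finset.Icc 1 (p-1) = insert 1 (Finset.Icc 2 (p-1)) := by
    ext x; simp [Finset.mem_Icc, Finset.mem_insert]; omega
  have hnm : (1:ℕ) ∉ Finset.Icc 2 (p-1) := by simp
  have f1 : ((1:ℕ) : ZMod p)⁻¹ = 1 := by simp
  have e0 : ∑ S ∈ Finset.powersetCard 0 (Finset.Icc 2 (p-1)), ∏ i ∈ S, (i : ZMod p)⁻¹ = 1 := by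
    simp
  have h1 := peel15 (fun i => (i : ZMod p)⁻¹) hnm 0
  have h2 := peel15 (fun i => (i : ZMod p)⁻¹) hnm 1
  have h3 := peel15 (fun i => (i : ZMod p)⁻¹) hnm 2
  rw [← hicc] at h1 h2 h3
  simp only [show (0:ℕ)+1 = 1 from rfl, show (1:ℕ)+1 = 2 from rfl,
    show (2:ℕ)+1 = 3 from rfl] at h1 h2 h3
  rw [esymm_full_zero15 hp5 (by norm_num) (by norm_num)] at h1 h2 h3
  rw [e0, f1] at h1
  rw [f1, one_mul] at h2 h3
  have e1 : ∑ S ∈ Finset.powersetCard 1 (Finset.Icc 2 (p-1)), ∏ i ∈ S, (i : ZMod p)⁻¹ = -1 := by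
    linear_combination -h1
  have e2 : ∑ S ∈ Finset.powersetCard 2 (Finset.Icc 2 (p-1)), ∏ i ∈ S, (i : ZMod p)⁻¹ = 1 := by
    linear_combination -h2 - e1
  linear_combination -h3 - e2

lemma T_eq15 (hp5 : 3 < p) :
    ∑ k ∈ Finset.Icc 1 (p-1), ∑ S ∈ Finset.powersetCard 4 (Finset.Icc 1 k),
      ∏ i ∈ S, (i : ZMod p)⁻¹ = -1 := by
  have h4 : p ≠ 4 := by rintro rfl; exact absurd hp.out (by norm_num)
  have h5 : 5 ≤ p := by omega
  have hsplit : Finset.Icc 1 (p-1) = insert (p-1) (Finset.Icc 1 (p-2)) := by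
    ext x; simp [Finset.mem_Icc, Finset.mem_insert]; omega
  rw [hsplit, Finset.sum_insert (by simp [Finset.mem_Icc]; omega)]
  have hf : ∀ m, 1 ≤ m → m ≤ (p-2) + 1 → (m : ZMod p) * (m : ZMod p)⁻¹ = 1 := by
    intro m h1 h2
    exact mul_inv_cancel₀ (cast_ne_zero_of_mem15 h1 (by omega))
  have hh := hockey15 (fun i => (i : ZMod p)⁻¹) (p-2) hf
  rw [show p-2+1 = p-1 by omega] at hh
  rw [hh]
  have hfac : (((p-2 : ℕ) : ZMod p) + 1) = -1 := by
    rw [Nat.cast_sub (show 2 ≤ p by omega)]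
    have : ((p : ℕ) : ZMod p) = 0 := ZMod.natCast_self p
    rw [this]
    push_cast
    ring
  rw [hfac]
  have hicc : Finset.Icc 1 (p-1) = insert 1 (Finset.Icc 2 (p-1)) := by
    ext x; simp [Finset.mem_Icc, Finset.mem_insert]; omega
  have hpeel := peel15 (fun i => (i : ZMod p)⁻¹) (a := 1) (s := Finset.Icc 2 (p-1)) (by simp) 3
  rw [← hicc] at hpeel
  simp only [show (3:ℕ)+1 = 4 from rfl] at hpeel
  have f1 : ((1:ℕ) : ZMod p)⁻¹ = 1 := by simp
  rw [f1, one_mul] at hpeel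
  rw [hpeel, esymm_tail15 hp5]
  ring


lemma cast_M15 {F : Type*} [Field F] (hF : ∀ i : ℕ, 1 ≤ i → i ≤ p - 1 → ((i : F)) ≠ 0) :
    (((∑ k ∈ Finset.Icc 1 (p-1), ∑ S ∈ Finset.powersetCard 4 (Finset.Icc 1 k),
          ∏ i ∈ S, ((p-1).factorial / i)) + (p-1).factorial^4 : ℕ) : F)
      = ((p-1).factorial : F)^4 *
        ((∑ k ∈ Finset.Icc 1 (p-1), ∑ S ∈ Finset.powersetCard 4 (Finset.Icc 1 k),
            ∏ i ∈ S, (i : F)⁻¹) + 1) := by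
  push_cast
  rw [mul_add, mul_one, Finset.mul_sum]
  congr 1
  refine Finset.sum_congr rfl fun k hk => ?_
  rw [Finset.mul_sum]
  refine Finset.sum_congr rfl fun S hS => ?_
  have hcard : S.card = 4 := (Finset.mem_powersetCard.mp hS).2
  have hsub : S ⊆ Finset.Icc 1 k := (Finset.mem_powersetCard.mp hS).1
  have hk' : k ≤ p - 1 := (Finset.mem_Icc.mp hk).2
  rw [← hcard, ← Finset.prod_const (((p-1).factorial : F)), ← Finset.prod_mul_distrib]
  refine Finset.prod_congr rfl fun i hi => ?_
  have hi' := Finset.mem_Icc.mp (hsub hi)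
  have hdvd : i ∣ (p-1).factorial := Nat.dvd_factorial (by omega) (by omega)
  have hne := hF i (by omega) (by omega)
  have hkey : (i : F) * (((p-1).factorial / i : ℕ) : F) = ((p-1).factorial : F) := by
    rw [← Nat.cast_mul, Nat.mul_div_cancel' hdvd]
  rw [show ((p-1).factorial : F) * (i : F)⁻¹
      = ((i : F) * (((p-1).factorial / i : ℕ) : F)) * (i : F)⁻¹ from by rw [hkey]]
  rw [mul_comm (i : F), mul_assoc, mul_inv_cancel₀ hne, mul_one]

end aux

theorem stmt_15 (p : ℕ) [hp : Fact p.Prime] (h : 3 < p) :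
    ‖((∑ k ∈ Finset.Icc 1 (p - 1),
          ∑ S ∈ Finset.powersetCard 4 (Finset.Icc 1 k), ∏ i ∈ S, (1 : ℚ) / i
        - (-1) : ℚ) : ℚ_[p])‖
      ≤ (p : ℝ) ^ (-1 : ℤ) := by
  have h2 := hp.out.two_le
  have hQ : ∀ i : ℕ, 1 ≤ i → i ≤ p - 1 → ((i : ℚ)) ≠ 0 := by
    intro i a b
    exact Nat.cast_ne_zero.mpr (by omega)
  set M : ℕ := (∑ k ∈ Finset.Icc 1 (p-1), ∑ S ∈ Finset.powersetCard 4 (Finset.Icc 1 k),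
      ∏ i ∈ S, ((p-1).factorial / i)) + (p-1).factorial^4 with hMdef
  have hMQ := cast_M15 (p := p) (F := ℚ) hQ
  have hMK := cast_M15 (p := p) (F := ZMod p) (fun i a b => cast_ne_zero_of_mem15 a b)
  rw [T_eq15 h] at hMK
  have hMK0 : ((M : ZMod p)) = 0 := by rw [hMdef, hMK]; ring
  have hdvd : (p : ℤ) ∣ (M : ℤ) := by
    exact_mod_cast (ZMod.natCast_eq_zero_iff M p).mp hMK0
  have hfac_ne : ¬ (p : ℤ) ∣ ((p-1).factorial : ℤ) := by
    rw [Int.natCast_dvd_natCast]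
    intro hdv
    have := (Nat.Prime.dvd_factorial hp.out).mp hdv
    omega
  have hnormfac : ‖(((p-1).factorial : ℤ) : ℚ_[p])‖ = 1 := by
    refine le_antisymm (Padic.norm_int_le_one _) ?_
    by_contra hlt
    push_neg at hlt
    exact hfac_ne ((PadicInt.norm_int_lt_one_iff_dvd _).mp (by rw [← PadicInt.padic_norm_e_of_padicInt]; exact_mod_cast hlt))
  have hq : ((M : ℕ) : ℚ) = ((p-1).factorial : ℚ)^4 *
      (∑ k ∈ Finset.Icc 1 (p - 1),
          ∑ S ∈ Finset.powersetCard 4 (Finset.Icc 1 k), ∏ i ∈ S, (1 : ℚ) / i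
        - (-1)) := by
    rw [hMdef, hMQ]
    simp only [one_div, sub_neg_eq_add]
  have hqp : ((M : ℤ) : ℚ_[p]) = (((p-1).factorial : ℚ_[p]))^4 *
      ((((∑ k ∈ Finset.Icc 1 (p - 1),
          ∑ S ∈ Finset.powersetCard 4 (Finset.Icc 1 k), ∏ i ∈ S, (1 : ℚ) / i
        - (-1)) : ℚ)) : ℚ_[p]) := by
    have := congrArg (fun x : ℚ => (x : ℚ_[p])) hq
    push_cast at this
    push_cast
    exact this
  have h1 : ‖((M : ℤ) : ℚ_[p])‖ ≤ (p : ℝ) ^ (-1 : ℤ) := by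
    have := (Padic.norm_int_le_pow_iff_dvd (p := p) (M : ℤ) 1).mpr (by simpa using hdvd)
    simpa using this
  have h2' : ‖((M : ℤ) : ℚ_[p])‖ = ‖((((∑ k ∈ Finset.Icc 1 (p - 1),
          ∑ S ∈ Finset.powersetCard 4 (Finset.Icc 1 k), ∏ i ∈ S, (1 : ℚ) / i
        - (-1)) : ℚ)) : ℚ_[p])‖ := by
    rw [hqp, norm_mul, norm_pow]
    have : ((((p-1).factorial : ℕ)) : ℚ_[p]) = (((p-1).factorial : ℤ) : ℚ_[p]) := by push_cast; ring
    rw [this, hnormfac, one_pow, one_mul]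
  rw [← h2']
  exact h1
end

section
/- For any prime p > 3, sum_{k=1}^{p-1} sum_{1 ≤ i < j ≤ k} (1/(i j^2) + 1/(i^2 j)) ≡ 0 (mod p). -/
open Finset

section zmodpart

variable {p : ℕ} [hp : Fact p.Prime]

private lemma sum_range_zmod_s16 (f : ZMod p → ZMod p) :
    ∑ i ∈ Finset.range p, f (i : ZMod p) = ∑ x : ZMod p, f x := by
  haveI : NeZero p := ⟨hp.out.ne_zero⟩
  refine Finset.sum_nbij' (fun i => (i : ZMod p)) (fun x => x.val) ?_ ?_ ?_ ?_ ?_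
  · intro a _; exact Finset.mem_univ _
  · intro x _; exact Finset.mem_range.mpr (ZMod.val_lt x)
  · intro a ha; exact ZMod.val_cast_of_lt (Finset.mem_range.mp ha)
  · intro x _; exact ZMod.natCast_zmod_val x
  · intro a _; rfl

private lemma sum_Icc_eq_sum_univ (f : ZMod p → ZMod p) (hf : f 0 = 0) :
    ∑ i ∈ Finset.Icc 1 (p - 1), f (i : ZMod p) = ∑ x : ZMod p, f x := by
  have hp1 : 0 < p := hp.out.pos
  rw [← sum_range_zmod_s16 f, Finset.range_eq_Ico,
    Finset.sum_eq_sum_Ico_succ_bot hp1]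
  have h2 : Finset.Ico 1 p = Finset.Icc 1 (p - 1) := by
    ext x; simp only [Finset.mem_Ico, Finset.mem_Icc]; omega
  rw [h2, Nat.cast_zero, hf, zero_add]

private lemma cast_nz {i : ℕ} (h1 : 1 ≤ i) (h2 : i ≤ p - 1) : (i : ZMod p) ≠ 0 := by
  have hp1 : 0 < p := hp.out.pos
  rw [Ne, ZMod.natCast_eq_zero_iff]
  intro hdvd
  have := Nat.le_of_dvd (by omega) hdvd
  omega

private lemma H_zero (h : 3 < p) : ∑ i ∈ Finset.Icc 1 (p - 1), ((i : ZMod p))⁻¹ = 0 := by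
  rw [sum_Icc_eq_sum_univ (fun x => x⁻¹) inv_zero]
  have hb : Function.Bijective (Inv.inv : ZMod p → ZMod p) :=
    Function.Involutive.bijective (fun x => inv_inv x)
  have : ∑ x : ZMod p, x⁻¹ = ∑ x : ZMod p, x :=
    (Fintype.sum_bijective Inv.inv hb _ _ (fun x => (inv_inv x).symm)).symm
  rw [this]
  have := FiniteField.sum_pow_lt_card_sub_one (K := ZMod p) 1
    (by rw [ZMod.card]; omega)
  simpa using this

private lemma H2_zero (h : 3 < p) :
    ∑ i ∈ Finset.Icc 1 (p - 1), ((i : ZMod p) * (i : ZMod p))⁻¹ = 0 := by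
  rw [sum_Icc_eq_sum_univ (fun x => (x * x)⁻¹) (by simp)]
  have hb : Function.Bijective (Inv.inv : ZMod p → ZMod p) :=
    Function.Involutive.bijective (fun x => inv_inv x)
  have : ∑ x : ZMod p, (x * x)⁻¹ = ∑ x : ZMod p, x * x :=
    Fintype.sum_bijective Inv.inv hb _ _ (fun x => by rw [mul_inv])
  rw [this]
  have := FiniteField.sum_pow_lt_card_sub_one (K := ZMod p) 2
    (by rw [ZMod.card]; omega)
  rw [← this]
  exact Finset.sum_congr rfl fun x _ => (sq x).symm

private lemma zmod_main (h : 3 < p) :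
    ∑ k ∈ Finset.Icc 1 (p - 1), ∑ i ∈ Finset.Icc 1 k, ∑ j ∈ Finset.Icc (i + 1) k,
      (((i : ZMod p) * (j : ZMod p) ^ 2)⁻¹ + ((i : ZMod p) ^ 2 * (j : ZMod p))⁻¹) = 0 := by
  have hp1 : 0 < p := hp.out.pos
  set n := p - 1 with hn
  -- swap k and i
  rw [Finset.sum_comm' (s' := fun i => Finset.Icc i n) (t' := Finset.Icc 1 n)
    (fun k i => by simp only [Finset.mem_Icc]; omega)]
  -- swap k and j inside
  have step1 : ∀ i ∈ Finset.Icc 1 n,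
      (∑ k ∈ Finset.Icc i n, ∑ j ∈ Finset.Icc (i + 1) k,
        (((i : ZMod p) * (j : ZMod p) ^ 2)⁻¹ + ((i : ZMod p) ^ 2 * (j : ZMod p))⁻¹))
      = ∑ j ∈ Finset.Icc (i + 1) n,
          (-(j : ZMod p)) * (((i : ZMod p) * (j : ZMod p) ^ 2)⁻¹ +
            ((i : ZMod p) ^ 2 * (j : ZMod p))⁻¹) := by
    intro i hi
    rw [Finset.sum_comm' (s' := fun j => Finset.Icc j n) (t' := Finset.Icc (i + 1) n)
      (fun k j => by simp only [Finset.mem_Icc]; omega)]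
    refine Finset.sum_congr rfl fun j hj => ?_
    rw [Finset.mem_Icc] at hj
    rw [Finset.sum_const, Nat.card_Icc]
    have hcard : n + 1 - j = p - j := by omega
    rw [hcard, nsmul_eq_mul]
    congr 1
    have hjp : j ≤ p := by omega
    push_cast [Nat.cast_sub hjp]
    rw [ZMod.natCast_self, zero_sub]
  rw [Finset.sum_congr rfl step1]
  -- pointwise simplification
  have step2 : ∀ i ∈ Finset.Icc 1 n, ∀ j ∈ Finset.Icc (i + 1) n,
      (-(j : ZMod p)) * (((i : ZMod p) * (j : ZMod p) ^ 2)⁻¹ +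
        ((i : ZMod p) ^ 2 * (j : ZMod p))⁻¹)
      = -(((i : ZMod p) * (j : ZMod p))⁻¹) + -(((i : ZMod p) * (i : ZMod p))⁻¹) := by
    intro i hi j hj
    rw [Finset.mem_Icc] at hi hj
    have hi0 : (i : ZMod p) ≠ 0 := cast_nz hi.1 hi.2
    have hj0 : (j : ZMod p) ≠ 0 := cast_nz (by omega) hj.2
    field_simp
    ring
  rw [Finset.sum_congr rfl (fun i hi => Finset.sum_congr rfl (step2 i hi))]
  simp only [Finset.sum_add_distrib, Finset.sum_neg_distrib]
  -- now two sums
  have hS2 : ∑ i ∈ Finset.Icc 1 n, ∑ j ∈ Finset.Icc (i + 1) n,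
      ((i : ZMod p) * (i : ZMod p))⁻¹ = 0 := by
    have e1 : ∀ i ∈ Finset.Icc 1 n, ∑ j ∈ Finset.Icc (i + 1) n,
        ((i : ZMod p) * (i : ZMod p))⁻¹
        = -(((i : ZMod p) * (i : ZMod p))⁻¹) - ((i : ZMod p))⁻¹ := by
      intro i hi
      rw [Finset.mem_Icc] at hi
      have hi0 : (i : ZMod p) ≠ 0 := cast_nz hi.1 hi.2
      rw [Finset.sum_const, Nat.card_Icc, nsmul_eq_mul]
      have hcast : ((n + 1 - (i + 1) : ℕ) : ZMod p) = -1 - (i : ZMod p) := by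
        have h1 : n + 1 - (i + 1) = p - 1 - i := by omega
        have h2 : i ≤ p - 1 := hi.2
        rw [h1, Nat.cast_sub h2, Nat.cast_sub (by omega : 1 ≤ p)]
        rw [ZMod.natCast_self, Nat.cast_one, zero_sub]
      rw [hcast]
      field_simp
    rw [Finset.sum_congr rfl e1, Finset.sum_sub_distrib, Finset.sum_neg_distrib,
      H_zero h, H2_zero h]
    simp
  have hS1 : ∑ i ∈ Finset.Icc 1 n, ∑ j ∈ Finset.Icc (i + 1) n,
      ((i : ZMod p) * (j : ZMod p))⁻¹ = 0 := by
    have hA : (∑ i ∈ Finset.Icc 1 n, ∑ j ∈ Finset.Icc 1 i,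
        ((i : ZMod p) * (j : ZMod p))⁻¹)
        + ∑ i ∈ Finset.Icc 1 n, ∑ j ∈ Finset.Icc (i + 1) n,
        ((i : ZMod p) * (j : ZMod p))⁻¹ = 0 := by
      rw [← Finset.sum_add_distrib]
      have e : ∀ i ∈ Finset.Icc 1 n,
          (∑ j ∈ Finset.Icc 1 i, ((i : ZMod p) * (j : ZMod p))⁻¹)
          + ∑ j ∈ Finset.Icc (i + 1) n, ((i : ZMod p) * (j : ZMod p))⁻¹
          = (0 : ZMod p) := by
        intro i hi
        rw [Finset.mem_Icc] at hi
        have : Finset.Icc 1 i = Finset.Ioc 0 i := by rw [← Finset.Icc_add_one_left_eq_Ioc, zero_add]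
        rw [this]
        have : Finset.Icc (i + 1) n = Finset.Ioc i n := Finset.Icc_add_one_left_eq_Ioc i n
        rw [this]
        rw [Finset.sum_Ioc_consecutive _ (Nat.zero_le i) hi.2]
        have : Finset.Ioc 0 n = Finset.Icc 1 n := (Finset.Icc_add_one_left_eq_Ioc 0 n).symm
        rw [this]
        have : ∀ j ∈ Finset.Icc 1 n, ((i : ZMod p) * (j : ZMod p))⁻¹
            = (i : ZMod p)⁻¹ * ((j : ZMod p))⁻¹ := fun j _ => by rw [mul_inv]
        rw [Finset.sum_congr rfl this, ← Finset.mul_sum, H_zero h, mul_zero]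
      rw [Finset.sum_congr rfl e, Finset.sum_const_zero]
    have hB : (∑ i ∈ Finset.Icc 1 n, ∑ j ∈ Finset.Icc 1 i,
        ((i : ZMod p) * (j : ZMod p))⁻¹)
        = ∑ i ∈ Finset.Icc 1 n, ∑ j ∈ Finset.Icc (i + 1) n,
        ((i : ZMod p) * (j : ZMod p))⁻¹ := by
      rw [Finset.sum_comm' (s' := fun j => Finset.Icc j n) (t' := Finset.Icc 1 n)
        (fun i j => by simp only [Finset.mem_Icc]; omega)]
      have e : ∀ j ∈ Finset.Icc 1 n,
          ∑ i ∈ Finset.Icc j n, ((i : ZMod p) * (j : ZMod p))⁻¹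
          = ((j : ZMod p) * (j : ZMod p))⁻¹
            + ∑ i ∈ Finset.Icc (j + 1) n, ((j : ZMod p) * (i : ZMod p))⁻¹ := by
        intro j hj
        rw [Finset.mem_Icc] at hj
        rw [Finset.Icc_eq_cons_Ioc hj.2, Finset.sum_cons, ← Finset.Icc_add_one_left_eq_Ioc]
        congr 1
        exact Finset.sum_congr rfl fun i _ => by rw [mul_comm]
      rw [Finset.sum_congr rfl e, Finset.sum_add_distrib, H2_zero h, zero_add]
    have h2 : (2 : ZMod p) ≠ 0 := by
      have := cast_nz (p := p) (i := 2) (by omega) (by omega)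
      simpa using this
    rw [hB] at hA
    have h2S : (2 : ZMod p) * (∑ i ∈ Finset.Icc 1 n, ∑ j ∈ Finset.Icc (i + 1) n,
        ((i : ZMod p) * (j : ZMod p))⁻¹) = 0 := by rw [two_mul]; exact hA
    rcases mul_eq_zero.mp h2S with hc | hc
    · exact absurd hc h2
    · exact hc
  rw [hS1, hS2]
  simp
private lemma norm_one_div_nat_le_one {m : ℕ} (hm : ¬ p ∣ m) :
    ‖(((1 / (m : ℚ)) : ℚ) : ℚ_[p])‖ ≤ 1 := by
  have h1 : (((1 / (m : ℚ)) : ℚ) : ℚ_[p]) = 1 / (((m : ℤ) : ℚ_[p])) := by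
    push_cast; ring
  have hlt : ¬ ‖((m : ℤ) : ℚ_[p])‖ < 1 := by
    rw [Padic.norm_intCast_lt_one_iff]
    exact_mod_cast hm
  have heq : ‖((m : ℤ) : ℚ_[p])‖ = 1 :=
    le_antisymm (Padic.norm_int_le_one _) (not_lt.mp hlt)
  rw [h1, norm_div, norm_one, heq]
  norm_num

private lemma toZMod_one_div (m : ℕ) (hm : ¬ p ∣ m)
    (hb : ‖(((1 / (m : ℚ)) : ℚ) : ℚ_[p])‖ ≤ 1) :
    PadicInt.toZMod (⟨(((1 / (m : ℚ)) : ℚ) : ℚ_[p]), hb⟩ : ℤ_[p]) = ((m : ZMod p))⁻¹ := by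
  have hm0 : m ≠ 0 := by rintro rfl; exact hm (dvd_zero p)
  have hmq : ((m : ℚ) : ℚ_[p]) ≠ 0 := by
    rw [Rat.cast_ne_zero]
    exact Nat.cast_ne_zero.mpr hm0
  have hmul : ((m : ℤ_[p]) * ⟨(((1 / (m : ℚ)) : ℚ) : ℚ_[p]), hb⟩ : ℤ_[p]) = 1 := by
    apply Subtype.ext
    show ((m : ℕ) : ℚ_[p]) * (((1 / (m : ℚ)) : ℚ) : ℚ_[p]) = 1
    have hm0' : ((m : ℕ) : ℚ_[p]) ≠ 0 := Nat.cast_ne_zero.mpr hm0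
    push_cast
    field_simp
  have h2 := congrArg PadicInt.toZMod hmul
  erw [map_mul, map_natCast, map_one] at h2
  exact eq_inv_of_mul_eq_one_left (by rw [mul_comm] at h2; exact h2)

private noncomputable def Gaux (p : ℕ) [Fact p.Prime] (m : ℕ) : ℤ_[p] :=
  if hb : ‖(((1 / (m : ℚ)) : ℚ) : ℚ_[p])‖ ≤ 1 then ⟨_, hb⟩ else 0

private lemma Gaux_coe {m : ℕ} (hm : ¬ p ∣ m) :
    ((Gaux p m : ℤ_[p]) : ℚ_[p]) = (((1 / (m : ℚ)) : ℚ) : ℚ_[p]) := by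
  rw [Gaux]; erw [dif_pos (norm_one_div_nat_le_one hm)]

private lemma Gaux_toZMod {m : ℕ} (hm : ¬ p ∣ m) :
    PadicInt.toZMod (Gaux p m) = ((m : ZMod p))⁻¹ := by
  rw [Gaux]; erw [dif_pos (norm_one_div_nat_le_one hm)]
  exact toZMod_one_div m hm _

end zmodpart

theorem stmt_16 (p : ℕ) [hp : Fact p.Prime] (h : 3 < p) :
    ‖((∑ k ∈ Finset.Icc 1 (p - 1), ∑ i ∈ Finset.Icc 1 k, ∑ j ∈ Finset.Icc (i + 1) k,
          (1 / ((i : ℚ) * (j : ℚ) ^ 2) + 1 / ((i : ℚ) ^ 2 * j)) : ℚ) : ℚ_[p])‖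
      ≤ (p : ℝ) ^ (-1 : ℤ) := by
  have hp0 : 0 < p := hp.out.pos
  -- divisibility facts
  have hdvd : ∀ {i j k : ℕ}, k ∈ Finset.Icc 1 (p - 1) → i ∈ Finset.Icc 1 k →
      j ∈ Finset.Icc (i + 1) k → ¬ p ∣ (i * j ^ 2) ∧ ¬ p ∣ (i ^ 2 * j) := by
    intro i j k hk hi hj
    rw [Finset.mem_Icc] at hk hi hj
    have hpi : ¬ p ∣ i := by
      intro hd; have := Nat.le_of_dvd (by omega) hd; omega
    have hpj : ¬ p ∣ j := by
      intro hd; have := Nat.le_of_dvd (by omega) hd; omega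
    constructor
    · intro hd
      rcases (Nat.Prime.dvd_mul hp.out).mp hd with h1 | h1
      · exact hpi h1
      · exact hpj (Nat.Prime.dvd_of_dvd_pow hp.out h1)
    · intro hd
      rcases (Nat.Prime.dvd_mul hp.out).mp hd with h1 | h1
      · exact hpi (Nat.Prime.dvd_of_dvd_pow hp.out h1)
      · exact hpj h1
  have coe_sum : ∀ {ι : Type} (s : Finset ι) (g : ι → ℤ_[p]),
      ((∑ x ∈ s, g x : ℤ_[p]) : ℚ_[p]) = ∑ x ∈ s, ((g x : ℤ_[p]) : ℚ_[p]) :=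
    fun s g => map_sum (PadicInt.Coe.ringHom) g s
  set T : ℤ_[p] := ∑ k ∈ Finset.Icc 1 (p - 1), ∑ i ∈ Finset.Icc 1 k,
      ∑ j ∈ Finset.Icc (i + 1) k, (Gaux p (i * j ^ 2) + Gaux p (i ^ 2 * j)) with hT
  have hcoe : ((T : ℤ_[p]) : ℚ_[p])
      = ((∑ k ∈ Finset.Icc 1 (p - 1), ∑ i ∈ Finset.Icc 1 k, ∑ j ∈ Finset.Icc (i + 1) k,
          (1 / ((i : ℚ) * (j : ℚ) ^ 2) + 1 / ((i : ℚ) ^ 2 * j)) : ℚ) : ℚ_[p]) := by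
    rw [hT, coe_sum, Rat.cast_sum]
    refine Finset.sum_congr rfl fun k hk => ?_
    rw [coe_sum, Rat.cast_sum]
    refine Finset.sum_congr rfl fun i hi => ?_
    rw [coe_sum, Rat.cast_sum]
    refine Finset.sum_congr rfl fun j hj => ?_
    obtain ⟨h1, h2⟩ := hdvd hk hi hj
    rw [PadicInt.coe_add, Gaux_coe h1, Gaux_coe h2]
    have : (1 / ((i : ℚ) * (j : ℚ) ^ 2) + 1 / ((i : ℚ) ^ 2 * j) : ℚ)
        = 1 / ((i * j ^ 2 : ℕ) : ℚ) + 1 / ((i ^ 2 * j : ℕ) : ℚ) := by push_cast; ring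
    rw [this, Rat.cast_add]
  rw [← hcoe, PadicInt.padic_norm_e_of_padicInt]
  have hgoal : ‖T‖ ≤ (p : ℝ) ^ (-(1 : ℕ) : ℤ) := by
    rw [PadicInt.norm_le_pow_iff_mem_span_pow, pow_one, ← PadicInt.maximalIdeal_eq_span_p,
      ← PadicInt.ker_toZMod, RingHom.mem_ker]
    rw [hT, map_sum]
    have : ∀ k ∈ Finset.Icc 1 (p - 1),
        PadicInt.toZMod (∑ i ∈ Finset.Icc 1 k, ∑ j ∈ Finset.Icc (i + 1) k,
          (Gaux p (i * j ^ 2) + Gaux p (i ^ 2 * j)))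
        = ∑ i ∈ Finset.Icc 1 k, ∑ j ∈ Finset.Icc (i + 1) k,
          (((i : ZMod p) * (j : ZMod p) ^ 2)⁻¹ + ((i : ZMod p) ^ 2 * (j : ZMod p))⁻¹) := by
      intro k hk
      rw [map_sum]
      refine Finset.sum_congr rfl fun i hi => ?_
      rw [map_sum]
      refine Finset.sum_congr rfl fun j hj => ?_
      obtain ⟨h1, h2⟩ := hdvd hk hi hj
      rw [map_add, Gaux_toZMod h1, Gaux_toZMod h2]
      push_cast
      ring
    rw [Finset.sum_congr rfl this]
    exact zmod_main h
  exact_mod_cast hgoal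
end
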